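/- With the setup of the map Φ[a,b,c,d] (a,b,c,d > 0, ab > 1, g² = acd, (ab-1)e = a(c+d)c, (ab-1)f = a(c+d)d, h = be - c², k = bf - d²), the determinant of the full 4×4 matrix Φ(P_α) is zero for every α ∈ ℂ. -/

import Mathlib

/-- The determinant of the full 4×4 matrix `Φ(P_α)` vanishes for every `α ∈ ℂ`. -/
theorem det_PhiPalpha_eq_zero (a b c d e f g h k : ℝ)
    (ha : 0 < a) (hb : 0 < b) (hc : 0 < c) (hd : 0 < d) (hab : 1 < a * b)
    (hg : g ^ 2 = a * c * d)
    (he : (a * b - 1) * e = a * (c + d) * c)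
    (hf : (a * b - 1) * f = a * (c + d) * d)
    (hh : h = b * e - c ^ 2) (hk : k = b * f - d ^ 2) (α : ℂ) :
    Matrix.det
      !![(h : ℂ) - (c : ℂ) * (d : ℂ) * (α + starRingEnd ℂ α) +
           (k : ℂ) * (‖α‖ : ℂ) ^ 2, -(g : ℂ) + (g : ℂ) * α, 0, 0;
         -(g : ℂ) + (g : ℂ) * starRingEnd ℂ α, (a : ℂ), starRingEnd ℂ α, 0;
         0, α, (b : ℂ) * (‖α‖ : ℂ) ^ 2,
           -(c : ℂ) * starRingEnd ℂ α - (d : ℂ) * (‖α‖ : ℂ) ^ 2;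
         0, 0, -(c : ℂ) * α - (d : ℂ) * (‖α‖ : ℂ) ^ 2,
           (e : ℂ) + (f : ℂ) * (‖α‖ : ℂ) ^ 2] = 0 := by
  subst hh hk
  have habs : ((‖α‖ : ℂ)) ^ 2 = α * starRingEnd ℂ α := by
    rw [Complex.mul_conj, ← Complex.sq_norm]
    push_cast
    ring
  have he' : ((a : ℂ) * b - 1) * e = a * (c + d) * c := by exact_mod_cast he
  have hf' : ((a : ℂ) * b - 1) * f = a * (c + d) * d := by exact_mod_cast hf
  have hg' : (g : ℂ) ^ 2 = a * c * d := by exact_mod_cast hg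
  simp only [habs]
  have h12 : (Fin.succAbove 1 2 : Fin 4) = 3 := by decide
  simp [Matrix.det_succ_row_zero, Fin.sum_univ_succ, h12]
  set A := starRingEnd ℂ α with hA
  set s := α * A with hs
  push_cast
  linear_combination (s * (b * (e + f * s) - (c^2 + c*d*(α + A) + d^2 * s))) *
      (he' + s * hf' - ((α - 1) * (A - 1)) * hg')
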